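/- Let R, a, c, Rc1, Rc2, Cf be reals with 0 < R < 1, a > 0, c > 0. Define R2 = R/(R + (1-R)*(1/c)), C2 = (1-R2)*Rc2 + R2*Rc2*(1 - 1/a) + (R2/a)*Cf*Rc1, and C = (1-R)*Rc2 + R*Cf*Rc1. If (1 - 1/c)*(1/R - 1) = (1 - (Rc1/Rc2)*Cf)*(1 - 1/a) and Rc2 ≠ 0 and C ≠ 0 and C2 ≠ 0, then R2/C2 = R/C. -/

import Mathlib

theorem stmt_2 (R a c Rc1 Rc2 Cf R2 C2 C : ℝ)
    (hR0 : 0 < R) (hR1 : R < 1) (ha : 0 < a) (hc : 0 < c)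
    (hR2 : R2 = R / (R + (1 - R) * (1 / c)))
    (hC2 : C2 = (1 - R2) * Rc2 + R2 * Rc2 * (1 - 1 / a) + (R2 / a) * Cf * Rc1)
    (hC : C = (1 - R) * Rc2 + R * Cf * Rc1)
    (hdesign : (1 - 1 / c) * (1 / R - 1) = (1 - (Rc1 / Rc2) * Cf) * (1 - 1 / a))
    (hRc2ne : Rc2 ≠ 0) (hCne : C ≠ 0) (hC2ne : C2 ≠ 0) :
    R2 / C2 = R / C := by
  have h1R : 0 < 1 - R := by linarith
  have hE : 0 < R * c + (1 - R) := by positivity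
  have hEne : R * c + (1 - R) ≠ 0 := ne_of_gt hE
  have hR2' : R2 = R * c / (R * c + (1 - R)) := by
    rw [hR2, div_eq_div_iff (by positivity) hEne]; field_simp
  have hC2' : C2 = (Rc2 * ((R * c + (1 - R)) * a) + R * c * (Cf * Rc1 - Rc2)) /
      ((R * c + (1 - R)) * a) := by
    rw [hC2, hR2']; field_simp; ring
  field_simp at hdesign
  rw [div_eq_div_iff hC2ne hCne, hR2', hC2', hC]
  rw [div_mul_eq_mul_div, ← mul_div_assoc, div_eq_div_iff hEne (by positivity)]
  linear_combination ((R * c + (1 - R)) * R) * hdesign
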